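/- Let k ≥ 1 and let P be a real k×k matrix with nonnegative entries such that ‖P‖∞ < 1, where ‖M‖∞ := max_i ∑_j |M_{ij}|. Then there exists a unique real k×k matrix X with nonnegative entries and spectral radius ρ(X) < 1 (where ρ(X) := lim_{m→∞} ‖X^m‖∞^{1/m}) such that (I − X)² = I − P; moreover this X satisfies ‖X‖∞ < 1. -/

import Mathlib

attribute [local instance] Matrix.linftyOpNormedRing Matrix.linftyOpNormedAlgebra

variable {k : ℕ}

/-- The spectral radius of a real `k × k` matrix, with respect to the operator norm
`‖M‖ = max_i ∑_j |M i j|` induced by the supremum norm on `ℝᵏ`: it is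
`ρ(M) = lim_{m → ∞} ‖M ^ m‖ ^ (1/m)`, which (by submultiplicativity of the norm,
via Fekete's lemma) equals `inf_{m ≥ 1} ‖M ^ m‖ ^ (1/m)`. -/
noncomputable def specRad (M : Matrix (Fin k) (Fin k) ℝ) : ℝ :=
  ⨅ m : ℕ, ‖M ^ (m + 1)‖ ^ (1 / (m + 1 : ℝ))

/-- Entrywise bound by the linfty operator norm. -/
lemma entry_abs_le_norm (M : Matrix (Fin k) (Fin k) ℝ) (i j : Fin k) : |M i j| ≤ ‖M‖ := by
  rw [Matrix.linfty_opNorm_def]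
  have h1 : ‖M i j‖₊ ≤ ∑ j' : Fin k, ‖M i j'‖₊ :=
    Finset.single_le_sum (f := fun j' => ‖M i j'‖₊) (fun _ _ => zero_le) (Finset.mem_univ j)
  have h2 : (∑ j' : Fin k, ‖M i j'‖₊) ≤ Finset.univ.sup fun i : Fin k => ∑ j' : Fin k, ‖M i j'‖₊ :=
    Finset.le_sup (f := fun i : Fin k => ∑ j' : Fin k, ‖M i j'‖₊) (Finset.mem_univ i)
  calc |M i j| = (‖M i j‖₊ : ℝ) := by simp [Real.norm_eq_abs]
    _ ≤ _ := by exact_mod_cast h1.trans h2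

/-- Norm of powers is submultiplicative (with the convention ‖M⁰‖ = ‖1‖ = 1). -/
lemma norm_pow_le_matrix (hk : 1 ≤ k) (M : Matrix (Fin k) (Fin k) ℝ) (q : ℕ) :
    ‖M ^ q‖ ≤ ‖M‖ ^ q := by
  haveI : Nonempty (Fin k) := ⟨⟨0, hk⟩⟩
  induction q with
  | zero => simp
  | succ n ih =>
    rw [pow_succ, pow_succ]
    calc ‖M ^ n * M‖ ≤ ‖M ^ n‖ * ‖M‖ := norm_mul_le _ _
      _ ≤ ‖M‖ ^ n * ‖M‖ := by
        have := norm_nonneg M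
        gcongr

/-- Geometric decay of powers once some power has norm below one. -/
lemma geom_bound (hk : 1 ≤ k) (A : Matrix (Fin k) (Fin k) ℝ) (N : ℕ)
    (hA : ‖A ^ (N + 1)‖ < 1) :
    ∃ C t : ℝ, 0 ≤ C ∧ 0 ≤ t ∧ t < 1 ∧ ∀ m, ‖A ^ m‖ ≤ C * t ^ m := by
  haveI : Nonempty (Fin k) := ⟨⟨0, hk⟩⟩
  set N1 := N + 1 with hN1
  set s : ℝ := max ‖A ^ N1‖ (1 / 2) with hs
  have hs0 : (0 : ℝ) < s := lt_of_lt_of_le (by norm_num) (le_max_right _ _)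
  have hs1 : s < 1 := max_lt hA (by norm_num)
  have hsA : ‖A ^ N1‖ ≤ s := le_max_left _ _
  set t : ℝ := s ^ ((N1 : ℝ)⁻¹) with htdef
  have ht0 : 0 < t := Real.rpow_pos_of_pos hs0 _
  have ht1 : t < 1 := Real.rpow_lt_one hs0.le hs1 (by positivity)
  set B : ℝ := ∑ i ∈ Finset.range (N1 + 1), ‖A ^ i‖ with hBdef
  have hB : ∀ r ≤ N1, ‖A ^ r‖ ≤ B := fun r hr =>
    Finset.single_le_sum (fun i _ => norm_nonneg _) (Finset.mem_range.2 (Nat.lt_succ_of_le hr))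
  have hB0 : 0 ≤ B := le_trans (norm_nonneg _) (hB 0 (Nat.zero_le _))
  refine ⟨2 * B, t, by positivity, ht0.le, ht1, fun m => ?_⟩
  set q := m / N1 with hq
  set r := m % N1 with hr
  have hm : m = N1 * q + r := (Nat.div_add_mod m N1).symm
  have hrN : r < N1 := Nat.mod_lt _ (by omega)
  have h1 : ‖A ^ m‖ ≤ s ^ q * B := by
    calc ‖A ^ m‖ = ‖(A ^ N1) ^ q * A ^ r‖ := by rw [← pow_mul, ← pow_add, ← hm]
      _ ≤ ‖(A ^ N1) ^ q‖ * ‖A ^ r‖ := norm_mul_le _ _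
      _ ≤ ‖A ^ N1‖ ^ q * B :=
        mul_le_mul (norm_pow_le_matrix hk _ q) (hB r hrN.le) (norm_nonneg _)
          (pow_nonneg (norm_nonneg _) q)
      _ ≤ s ^ q * B := by
        have := pow_le_pow_left₀ (norm_nonneg _) hsA q
        gcongr
  have h2 : s ^ q ≤ 2 * t ^ m := by
    have htm : t ^ m = s ^ ((N1 : ℝ)⁻¹ * m) := by
      rw [htdef, ← Real.rpow_natCast (s ^ ((N1 : ℝ)⁻¹)) m, ← Real.rpow_mul hs0.le]
    have hexp : (N1 : ℝ)⁻¹ * m = (q : ℝ) + (r : ℝ) * (N1 : ℝ)⁻¹ := by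
      have hmc : (m : ℝ) = (N1 : ℝ) * q + r := by exact_mod_cast congrArg (Nat.cast (R := ℝ)) hm
      have hN1pos : (0 : ℝ) < (N1 : ℝ) := by positivity
      field_simp [hmc]
      ring
      linarith [hmc]
    have hrpow : s ≤ s ^ ((r : ℝ) * (N1 : ℝ)⁻¹) := by
      have h1le : (r : ℝ) * (N1 : ℝ)⁻¹ ≤ 1 := by
        rw [mul_inv_le_iff₀ (by positivity), one_mul]
        exact_mod_cast hrN.le
      calc s = s ^ (1 : ℝ) := (Real.rpow_one s).symm
        _ ≤ s ^ ((r : ℝ) * (N1 : ℝ)⁻¹) := Real.rpow_le_rpow_of_exponent_ge hs0 hs1.le h1le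
    have : s ^ q * s ≤ 2 * t ^ m * s := by
      rw [htm, hexp, Real.rpow_add hs0, Real.rpow_natCast]
      have hsq : (0 : ℝ) ≤ s ^ q := pow_nonneg hs0.le q
      have hs2 : (1 / 2 : ℝ) ≤ s := le_max_right _ _
      nlinarith [mul_le_mul_of_nonneg_right (mul_le_mul_of_nonneg_left hrpow hsq) hs0.le,
        mul_nonneg (mul_nonneg hsq hs0.le) (by linarith : (0:ℝ) ≤ 2 * s - 1)]
    exact le_of_mul_le_mul_right this hs0
  calc ‖A ^ m‖ ≤ s ^ q * B := h1
    _ ≤ (2 * t ^ m) * B := mul_le_mul_of_nonneg_right h2 hB0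
    _ = 2 * B * t ^ m := by ring

/-- From `specRad Y < 1` extract a power with norm below one. -/
lemma exists_pow_norm_lt_one (Y : Matrix (Fin k) (Fin k) ℝ) (h : specRad Y < 1) :
    ∃ N, ‖Y ^ (N + 1)‖ < 1 := by
  obtain ⟨m, hm⟩ := exists_lt_of_ciInf_lt h
  refine ⟨m, ?_⟩
  by_contra hge
  push_neg at hge
  have : (1 : ℝ) ≤ ‖Y ^ (m + 1)‖ ^ (1 / (m + 1 : ℝ)) :=
    Real.one_le_rpow hge (by positivity)
  linarith
/-- The spectral radius is at most the norm. -/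
lemma specRad_le_norm (M : Matrix (Fin k) (Fin k) ℝ) : specRad M ≤ ‖M‖ := by
  have hbdd : BddBelow (Set.range fun m : ℕ => ‖M ^ (m + 1)‖ ^ (1 / (m + 1 : ℝ))) := by
    refine ⟨0, fun x hx => ?_⟩
    obtain ⟨m, rfl⟩ := hx
    exact Real.rpow_nonneg (norm_nonneg _) _
  have h0 : ‖M ^ (0 + 1)‖ ^ (1 / ((0 : ℕ) + 1 : ℝ)) = ‖M‖ := by
    norm_num
  calc specRad M ≤ ‖M ^ (0 + 1)‖ ^ (1 / ((0 : ℕ) + 1 : ℝ)) := ciInf_le hbdd 0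
    _ = ‖M‖ := h0

/-- Uniqueness via the Sylvester-equation argument. -/
lemma eq_of_sq_eq (hk : 1 ≤ k) (X Y : Matrix (Fin k) (Fin k) ℝ)
    (hX : ∃ N, ‖X ^ (N + 1)‖ < 1) (hY : ∃ N, ‖Y ^ (N + 1)‖ < 1)
    (heq : (1 - Y) ^ 2 = (1 - X) ^ 2) : Y = X := by
  obtain ⟨NX, hNX⟩ := hX
  obtain ⟨NY, hNY⟩ := hY
  obtain ⟨CX, tX, hCX0, htX0, htX1, hboundX⟩ := geom_bound hk X NX hNX
  obtain ⟨CY, tY, hCY0, htY0, htY1, hboundY⟩ := geom_bound hk Y NY hNY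
  set t : ℝ := max tX tY with htdef
  have ht0 : 0 ≤ t := le_trans htX0 (le_max_left _ _)
  have ht1 : t < 1 := max_lt htX1 htY1
  have hbX : ∀ m, ‖X ^ m‖ ≤ CX * t ^ m := fun m =>
    le_trans (hboundX m) (by gcongr; exact le_max_left _ _)
  have hbY : ∀ m, ‖Y ^ m‖ ≤ CY * t ^ m := fun m =>
    le_trans (hboundY m) (by gcongr; exact le_max_right _ _)
  set D : Matrix (Fin k) (Fin k) ℝ := Y - X with hD
  -- key algebraic identity
  have key : Y * D + D * X = D + D := by
    have h : (1 - Y) ^ 2 - (1 - X) ^ 2 = 0 := by rw [heq, sub_self]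
    calc Y * D + D * X = ((1 - Y) ^ 2 - (1 - X) ^ 2) + (D + D) := by rw [hD]; noncomm_ring
      _ = D + D := by rw [h, zero_add]
  -- endomorphism formulation
  set L : Module.End ℝ (Matrix (Fin k) (Fin k) ℝ) := LinearMap.mulLeft ℝ Y with hLdef
  set R : Module.End ℝ (Matrix (Fin k) (Fin k) ℝ) := LinearMap.mulRight ℝ X with hRdef
  have hcomm : Commute L R := LinearMap.commute_mulLeft_right Y X
  have hLR : (L + R) D = D + D := by
    simp only [hLdef, hRdef, LinearMap.add_apply, LinearMap.mulLeft_apply,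
      LinearMap.mulRight_apply]
    exact key
  have hiter : ∀ n : ℕ, ((L + R) ^ n) D = (2 ^ n : ℕ) • D := by
    intro n
    induction n with
    | zero => simp
    | succ n ih =>
      have hstep : ((L + R) ^ (n + 1)) D = (L + R) (((L + R) ^ n) D) := by
        rw [pow_succ', Module.End.mul_apply]
      rw [hstep, ih, map_nsmul, hLR, smul_add, ← add_smul]
      congr 1
      ring
  -- binomial expansion
  have hbin : ∀ n : ℕ, ((L + R) ^ n) D
      = ∑ m ∈ Finset.range (n + 1), n.choose m • (Y ^ m * D * X ^ (n - m)) := by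
    intro n
    rw [hcomm.add_pow n]
    rw [LinearMap.sum_apply]
    refine Finset.sum_congr rfl fun m _ => ?_
    rw [Module.End.mul_apply, Module.End.natCast_apply, Module.End.mul_apply,
      hLdef, hRdef, LinearMap.pow_mulLeft, LinearMap.pow_mulRight,
      map_nsmul, map_nsmul, LinearMap.mulRight_apply, LinearMap.mulLeft_apply, mul_assoc]
  -- norm estimate
  have hnorm : ∀ n : ℕ, (2 ^ n : ℝ) * ‖D‖ ≤ (CY * CX) * t ^ n * (2 ^ n : ℝ) * ‖D‖ := by
    intro n
    have h1 : ((2 ^ n : ℕ) : ℝ) * ‖D‖ = ‖((L + R) ^ n) D‖ := by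
      rw [hiter n, ← Nat.cast_smul_eq_nsmul ℝ, norm_smul, Real.norm_natCast]
    have h2 : ‖((L + R) ^ n) D‖
        ≤ ∑ m ∈ Finset.range (n + 1), (n.choose m : ℝ) * (CY * t ^ m * (‖D‖ * (CX * t ^ (n - m)))) := by
      rw [hbin n]
      refine le_trans (norm_sum_le _ _) (Finset.sum_le_sum fun m _ => ?_)
      rw [← Nat.cast_smul_eq_nsmul ℝ, norm_smul, Real.norm_natCast]
      refine mul_le_mul_of_nonneg_left ?_ (Nat.cast_nonneg _)
      calc ‖Y ^ m * D * X ^ (n - m)‖ ≤ ‖Y ^ m * D‖ * ‖X ^ (n - m)‖ := norm_mul_le _ _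
        _ ≤ (‖Y ^ m‖ * ‖D‖) * ‖X ^ (n - m)‖ :=
          mul_le_mul_of_nonneg_right (norm_mul_le _ _) (norm_nonneg _)
        _ ≤ (CY * t ^ m * ‖D‖) * (CX * t ^ (n - m)) := by
          refine mul_le_mul (mul_le_mul (hbY m) le_rfl (norm_nonneg _) (by positivity))
            (hbX (n - m)) (norm_nonneg _) (by positivity)
        _ = CY * t ^ m * (‖D‖ * (CX * t ^ (n - m))) := by ring
    have h3 : ∑ m ∈ Finset.range (n + 1), (n.choose m : ℝ) * (CY * t ^ m * (‖D‖ * (CX * t ^ (n - m))))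
        = (CY * CX) * ‖D‖ * ∑ m ∈ Finset.range (n + 1), (n.choose m : ℝ) * (t ^ m * t ^ (n - m)) := by
      rw [Finset.mul_sum]
      refine Finset.sum_congr rfl fun m _ => ?_
      ring
    have h4 : ∑ m ∈ Finset.range (n + 1), (n.choose m : ℝ) * (t ^ m * t ^ (n - m))
        = t ^ n * (2 ^ n : ℝ) := by
      have : ∀ m ∈ Finset.range (n + 1), (n.choose m : ℝ) * (t ^ m * t ^ (n - m))
          = t ^ n * (n.choose m : ℝ) := by
        intro m hm
        rw [← pow_add, Nat.add_sub_cancel' (Nat.lt_succ_iff.mp (Finset.mem_range.mp hm))]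
        ring
      rw [Finset.sum_congr rfl this, ← Finset.mul_sum]
      congr 1
      exact_mod_cast Nat.sum_range_choose n
    calc (2 ^ n : ℝ) * ‖D‖ = ‖((L + R) ^ n) D‖ := by exact_mod_cast h1
      _ ≤ _ := h2
      _ = (CY * CX) * ‖D‖ * (t ^ n * (2 ^ n : ℝ)) := by rw [h3, h4]
      _ = (CY * CX) * t ^ n * (2 ^ n : ℝ) * ‖D‖ := by ring
  -- conclude D = 0
  have hDnorm : ∀ n : ℕ, ‖D‖ ≤ (CY * CX) * t ^ n * ‖D‖ := by
    intro n
    have h := hnorm n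
    have h2pos : (0 : ℝ) < 2 ^ n := by positivity
    nlinarith [norm_nonneg D]
  have hD0 : ‖D‖ = 0 := by
    by_contra hne
    have hpos : 0 < ‖D‖ := lt_of_le_of_ne (norm_nonneg _) (Ne.symm hne)
    have hone : ∀ n : ℕ, (1 : ℝ) ≤ (CY * CX) * t ^ n := by
      intro n
      have := hDnorm n
      nlinarith
    have htend : Filter.Tendsto (fun n : ℕ => (CY * CX) * t ^ n) Filter.atTop (nhds 0) := by
      simpa using (tendsto_pow_atTop_nhds_zero_of_lt_one ht0 ht1).const_mul (CY * CX)
    have := htend.eventually (eventually_lt_nhds (show (0:ℝ) < 1 by norm_num))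
    obtain ⟨n, hn⟩ := this.exists
    exact absurd (hone n) (not_le.mpr hn)
  have : D = 0 := norm_eq_zero.mp hD0
  rw [hD] at this
  exact sub_eq_zero.mp this

/-- Finite-dimensional `M`-matrix square root: if `P` is an entrywise nonnegative
real `k × k` matrix with `‖P‖_∞ < 1`, then there is a unique entrywise nonnegative
matrix `X` with spectral radius `ρ(X) < 1` such that `(I − X)² = I − P`; moreover
this `X` satisfies `‖X‖_∞ < 1`. -/
theorem finite_m_matrix_square_root (hk : 1 ≤ k)
    (P : Matrix (Fin k) (Fin k) ℝ)
    (hP : ∀ i j : Fin k, 0 ≤ P i j) (hPnorm : ‖P‖ < 1) :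
    ∃ X : Matrix (Fin k) (Fin k) ℝ,
      ((∀ i j : Fin k, 0 ≤ X i j) ∧ specRad X < 1 ∧ (1 - X) ^ 2 = 1 - P ∧ ‖X‖ < 1) ∧
      ∀ Y : Matrix (Fin k) (Fin k) ℝ,
        ((∀ i j : Fin k, 0 ≤ Y i j) ∧ specRad Y < 1 ∧ (1 - Y) ^ 2 = 1 - P) → Y = X := by
  haveI : Nonempty (Fin k) := ⟨⟨0, hk⟩⟩
  set p : ℝ := ‖P‖ with hp
  have hp0 : 0 ≤ p := norm_nonneg _
  -- the closed set on which we apply the fixed point theorem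
  set Sset : Set (Matrix (Fin k) (Fin k) ℝ) :=
    {M | (∀ i j : Fin k, 0 ≤ M i j) ∧ ‖M‖ ≤ p} with hSset
  have hclosed : IsClosed Sset := by
    have h1 : IsClosed {M : Matrix (Fin k) (Fin k) ℝ | ∀ i j : Fin k, 0 ≤ M i j} := by
      have : {M : Matrix (Fin k) (Fin k) ℝ | ∀ i j : Fin k, 0 ≤ M i j}
          = ⋂ i : Fin k, ⋂ j : Fin k, {M : Matrix (Fin k) (Fin k) ℝ | 0 ≤ M i j} := by
        ext M; simp
      rw [this]
      refine isClosed_iInter fun i => isClosed_iInter fun j => ?_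
      have hcont : Continuous fun M : Matrix (Fin k) (Fin k) ℝ => M i j := by
        refine (LipschitzWith.of_dist_le_mul (K := 1) fun M N => ?_).continuous
        rw [dist_eq_norm, dist_eq_norm, NNReal.coe_one, one_mul]
        calc ‖M i j - N i j‖ = |(M - N) i j| := by simp [Real.norm_eq_abs]
          _ ≤ ‖M - N‖ := entry_abs_le_norm _ i j
      exact isClosed_le continuous_const hcont
    have h2 : IsClosed {M : Matrix (Fin k) (Fin k) ℝ | ‖M‖ ≤ p} :=
      isClosed_le continuous_norm continuous_const
    exact h1.inter h2
  haveI : CompleteSpace Sset := hclosed.completeSpace_coe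
  haveI : @CompleteSpace Sset PseudoEMetricSpace.toUniformSpace := hclosed.completeSpace_coe
  haveI : Nonempty Sset := ⟨⟨0, fun i j => le_rfl, by simp [hp0]⟩⟩
  -- the iteration map
  have hmem : ∀ M : Matrix (Fin k) (Fin k) ℝ, M ∈ Sset →
      (2 : ℝ)⁻¹ • (P + M * M) ∈ Sset := by
    rintro M ⟨hMpos, hMnorm⟩
    constructor
    · intro i j
      have h1 : 0 ≤ (M * M) i j := by
        rw [Matrix.mul_apply]
        exact Finset.sum_nonneg fun l _ => mul_nonneg (hMpos i l) (hMpos l j)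
      have h2 : 0 ≤ (P + M * M) i j := by
        rw [Matrix.add_apply]; exact add_nonneg (hP i j) h1
      simpa using mul_nonneg (by norm_num : (0:ℝ) ≤ (2:ℝ)⁻¹) h2
    · rw [norm_smul]
      have h1 : ‖P + M * M‖ ≤ p + p * p := by
        calc ‖P + M * M‖ ≤ ‖P‖ + ‖M * M‖ := norm_add_le _ _
          _ ≤ p + ‖M‖ * ‖M‖ := by
            have := norm_mul_le M M
            simp only [hp]
            linarith
          _ ≤ p + p * p := by nlinarith [norm_nonneg M]
      have h2 : ‖(2:ℝ)⁻¹‖ = (2:ℝ)⁻¹ := by norm_num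
      rw [h2]
      nlinarith [hPnorm]
  set f : Sset → Sset := fun M => ⟨(2 : ℝ)⁻¹ • (P + (M : Matrix (Fin k) (Fin k) ℝ) * M),
    hmem M M.2⟩ with hf
  have hcontr : ContractingWith ‖P‖₊ f := by
    constructor
    · exact_mod_cast hPnorm
    · refine LipschitzWith.of_dist_le_mul fun M N => ?_
      have hMn : ‖(M : Matrix (Fin k) (Fin k) ℝ)‖ ≤ p := M.2.2
      have hNn : ‖(N : Matrix (Fin k) (Fin k) ℝ)‖ ≤ p := N.2.2
      rw [Subtype.dist_eq, Subtype.dist_eq, dist_eq_norm, dist_eq_norm]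
      simp only [hf]
      have hdiff : (2 : ℝ)⁻¹ • (P + (M : Matrix (Fin k) (Fin k) ℝ) * M)
          - (2 : ℝ)⁻¹ • (P + (N : Matrix (Fin k) (Fin k) ℝ) * N)
          = (2 : ℝ)⁻¹ • ((M : Matrix (Fin k) (Fin k) ℝ) * M - (N : Matrix (Fin k) (Fin k) ℝ) * N) := by
        rw [← smul_sub]
        congr 1
        abel
      rw [hdiff, norm_smul]
      have hsplit : (M : Matrix (Fin k) (Fin k) ℝ) * M - (N : Matrix (Fin k) (Fin k) ℝ) * N
          = (M : Matrix (Fin k) (Fin k) ℝ) * ((M : Matrix (Fin k) (Fin k) ℝ) - N)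
            + ((M : Matrix (Fin k) (Fin k) ℝ) - N) * N := by noncomm_ring
      have hb : ‖(M : Matrix (Fin k) (Fin k) ℝ) * M - (N : Matrix (Fin k) (Fin k) ℝ) * N‖
          ≤ 2 * p * ‖(M : Matrix (Fin k) (Fin k) ℝ) - N‖ := by
        rw [hsplit]
        calc ‖_ + _‖ ≤ ‖(M : Matrix (Fin k) (Fin k) ℝ) * ((M : Matrix (Fin k) (Fin k) ℝ) - N)‖
              + ‖((M : Matrix (Fin k) (Fin k) ℝ) - N) * N‖ := norm_add_le _ _
          _ ≤ ‖(M : Matrix (Fin k) (Fin k) ℝ)‖ * ‖(M : Matrix (Fin k) (Fin k) ℝ) - N‖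
              + ‖(M : Matrix (Fin k) (Fin k) ℝ) - N‖ * ‖(N : Matrix (Fin k) (Fin k) ℝ)‖ :=
            add_le_add (norm_mul_le _ _) (norm_mul_le _ _)
          _ ≤ 2 * p * ‖(M : Matrix (Fin k) (Fin k) ℝ) - N‖ := by
            nlinarith [norm_nonneg ((M : Matrix (Fin k) (Fin k) ℝ) - N)]
      have h2 : ‖(2:ℝ)⁻¹‖ = (2:ℝ)⁻¹ := by norm_num
      rw [h2]
      have hcoe : ((‖P‖₊ : NNReal) : ℝ) = p := rfl
      rw [hcoe]
      nlinarith [norm_nonneg ((M : Matrix (Fin k) (Fin k) ℝ) - N)]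
  set Xs : ↥Sset := ContractingWith.fixedPoint f hcontr with hXs
  have hfix : f Xs = Xs := hcontr.fixedPoint_isFixedPt
  set X : Matrix (Fin k) (Fin k) ℝ := (Xs : Matrix (Fin k) (Fin k) ℝ) with hXdef
  have hXpos : ∀ i j : Fin k, 0 ≤ X i j := Xs.2.1
  have hXnorm : ‖X‖ ≤ p := Xs.2.2
  have hXnorm1 : ‖X‖ < 1 := lt_of_le_of_lt hXnorm hPnorm
  have hfixcoe : (2 : ℝ)⁻¹ • (P + X * X) = X := congrArg Subtype.val hfix
  have hXeq : P + X * X = X + X := by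
    have h22 : (2 : ℝ) * 2⁻¹ = 1 := by norm_num
    have h2 : P + X * X = (2 : ℝ) • X := by
      calc P + X * X = (2 : ℝ) • ((2 : ℝ)⁻¹ • (P + X * X)) := by
            rw [smul_smul, h22, one_smul]
        _ = (2 : ℝ) • X := by rw [hfixcoe]
    rw [h2, two_smul]
  have hsq : (1 - X) ^ 2 = 1 - P := by
    calc (1 - X) ^ 2 = 1 - (X + X) + X * X := by noncomm_ring
      _ = 1 - (P + X * X) + X * X := by rw [hXeq]
      _ = 1 - P := by noncomm_ring
  have hspec : specRad X < 1 := lt_of_le_of_lt (specRad_le_norm X) hXnorm1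
  refine ⟨X, ⟨hXpos, hspec, hsq, hXnorm1⟩, ?_⟩
  rintro Y ⟨hYpos, hYspec, hYsq⟩
  refine eq_of_sq_eq hk X Y ⟨0, ?_⟩ (exists_pow_norm_lt_one Y hYspec) (by rw [hYsq, hsq])
  simpa using hXnorm1
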